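/- Let A, B be positive semidefinite matrices with A + B invertible, and let U be a unitary that commutes with Π_A and satisfies √A·√B·U = √(√A·B·√A), where B also commutes with Π_A. Then every vector v with √B·v = λ·U·√A·v for some scalar λ (or with √A·v = 0) lies entirely in Null(A) or in supp(A). -/

import Mathlib

open scoped ComplexOrder

open Classical in
/-- The unique positive semidefinite square root of a positive semidefinite matrix
(junk value 0 otherwise). -/
noncomputable def psqrt {n : Type*} [Fintype n] [DecidableEq n] (X : Matrix n n ℂ) :
    Matrix n n ℂ :=
  if h : X.PosSemidef then
    (h.1.eigenvectorUnitary : Matrix n n ℂ) *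
      Matrix.diagonal ((↑) ∘ (fun x : ℝ => √x) ∘ h.1.eigenvalues) *
      (star h.1.eigenvectorUnitary : Matrix n n ℂ)
  else 0

/-- The range (support) of a matrix, i.e. the orthogonal complement of its kernel. -/
noncomputable def msupp {n : Type*} [Fintype n] [DecidableEq n] (X : Matrix n n ℂ) :
    Submodule ℂ (EuclideanSpace ℂ n) :=
  (LinearMap.ker (Matrix.toEuclideanLin X))ᗮ

/-- The kernel of a matrix, as a subspace of Euclidean space. -/
noncomputable def mker {n : Type*} [Fintype n] [DecidableEq n] (X : Matrix n n ℂ) :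
    Submodule ℂ (EuclideanSpace ℂ n) :=
  LinearMap.ker (Matrix.toEuclideanLin X)

/-- The generalized geometric mean M(A,B) = √A · √(√(A⁺) B √(A⁺)) · √A, where Ap
stands for the Moore–Penrose pseudoinverse A⁺ of A. -/
noncomputable def geoMean {n : Type*} [Fintype n] [DecidableEq n]
    (A Ap B : Matrix n n ℂ) : Matrix n n ℂ :=
  psqrt A * psqrt (psqrt Ap * B * psqrt Ap) * psqrt A

section aux

variable {n : Type*} [Fintype n] [DecidableEq n]

open scoped MatrixOrder

noncomputable def Matrix.PosSemidef.sqrt {A : Matrix n n ℂ} (hA : A.PosSemidef) :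
    Matrix n n ℂ :=
  (hA.1.eigenvectorUnitary : Matrix n n ℂ) *
    Matrix.diagonal ((↑) ∘ (fun x : ℝ => √x) ∘ hA.1.eigenvalues) *
    (star hA.1.eigenvectorUnitary : Matrix n n ℂ)

lemma Matrix.PosSemidef.sqrt_eq_cfc {A : Matrix n n ℂ} (hA : A.PosSemidef) :
    hA.sqrt = CFC.sqrt A := by
  rw [CFC.sqrt_eq_real_sqrt A hA.nonneg, cfcₙ_eq_cfc (hf0 := Real.sqrt_zero),
    Matrix.IsHermitian.cfc_eq hA.1]
  rfl

lemma Matrix.PosSemidef.posSemidef_sqrt {A : Matrix n n ℂ} (hA : A.PosSemidef) :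
    hA.sqrt.PosSemidef := by
  rw [hA.sqrt_eq_cfc]; exact Matrix.nonneg_iff_posSemidef.mp (CFC.sqrt_nonneg A)

lemma Matrix.PosSemidef.sqrt_mul_self {A : Matrix n n ℂ} (hA : A.PosSemidef) :
    hA.sqrt * hA.sqrt = A := by
  rw [hA.sqrt_eq_cfc]; exact CFC.sqrt_mul_sqrt_self A hA.nonneg

lemma Matrix.PosSemidef.eq_sqrt_of_sq_eq {A B : Matrix n n ℂ} (hA : A.PosSemidef)
    (hB : B.PosSemidef) (h : A ^ 2 = B) : A = hB.sqrt := by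
  rw [hB.sqrt_eq_cfc]; exact (CFC.sqrt_unique (by rw [← pow_two]; exact h) hA.nonneg).symm

lemma toEL_mul (M N : Matrix n n ℂ) (v : EuclideanSpace ℂ n) :
    Matrix.toEuclideanLin (M * N) v
      = Matrix.toEuclideanLin M (Matrix.toEuclideanLin N v) := by
  simp [Matrix.toEuclideanLin_apply, Matrix.mulVec_mulVec]

lemma toEL_one (v : EuclideanSpace ℂ n) : Matrix.toEuclideanLin (1 : Matrix n n ℂ) v = v := by
  simp [Matrix.toEuclideanLin_apply, Matrix.one_mulVec]

/-- If `P` is idempotent and conjugation by the symmetry `2P - 1` fixes `Q`,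
then `P` and `Q` commute. -/
lemma comm_of_conj (P Q : Matrix n n ℂ)
    (hP : P * P = P) (hE : (P + P - 1) * Q * (P + P - 1) = Q) : P * Q = Q * P := by
  have h1 : P * Q + P * Q = P * Q * P + P * Q * P := by
    have h := congrArg (fun X => P * X) hE
    simp only [← mul_assoc, mul_sub, sub_mul, mul_add, add_mul, hP, mul_one, one_mul] at h
    linear_combination (norm := noncomm_ring) -h
  have h2 : Q * P + Q * P = P * Q * P + P * Q * P := by
    have h := congrArg (fun X => X * P) hE
    simp only [mul_assoc, mul_sub, sub_mul, mul_add, add_mul, hP, mul_one, one_mul] at h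
    linear_combination (norm := noncomm_ring) -h
  have h3 : P * Q + P * Q = Q * P + Q * P := h1.trans h2.symm
  have h4 : (2:ℂ) • (P * Q) = (2:ℂ) • (Q * P) := by
    have h5 : ((2:ℕ):ℂ) • (P * Q) = ((2:ℕ):ℂ) • (Q * P) := by
      rw [Nat.cast_smul_eq_nsmul, Nat.cast_smul_eq_nsmul, two_nsmul, two_nsmul]; exact h3
    exact_mod_cast h5
  exact smul_right_injective _ (by norm_num) h4

end aux

/-- If B and the unitary U commute with the support projection of A and
√A √B U = √(√A B √A), then every eigenvector of the pencil (√B, U√A)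
(including those with √A v = 0) lies entirely in Null(A) or in supp(A). -/
theorem pencil_eigenvector_in_null_or_supp
    {n : Type*} [Fintype n] [DecidableEq n]
    (A B U PiA : Matrix n n ℂ) (hA : A.PosSemidef) (hB : B.PosSemidef)
    (hAB : IsUnit (A + B))
    (hherm : PiA.IsHermitian) (hidem : PiA * PiA = PiA)
    (hrange : LinearMap.range (Matrix.toEuclideanLin PiA) = msupp A)
    (hBcomm : B * PiA = PiA * B)
    (hU : U ∈ Matrix.unitaryGroup n ℂ) (hUcomm : U * PiA = PiA * U)
    (hpolar : psqrt A * psqrt B * U = psqrt (psqrt A * B * psqrt A))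
    (v : EuclideanSpace ℂ n)
    (hv : (∃ lam : ℂ, Matrix.toEuclideanLin (psqrt B) v
            = lam • Matrix.toEuclideanLin (U * psqrt A) v) ∨
          Matrix.toEuclideanLin (psqrt A) v = 0) :
    v ∈ mker A ∨ v ∈ msupp A := by
  have hpA : psqrt A = hA.sqrt := dif_pos hA
  have hpB : psqrt B = hB.sqrt := dif_pos hB
  have haH : hA.sqrt.conjTranspose = hA.sqrt := hA.posSemidef_sqrt.1
  have hbH : hB.sqrt.conjTranspose = hB.sqrt := hB.posSemidef_sqrt.1
  have haa : hA.sqrt * hA.sqrt = A := hA.sqrt_mul_self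
  have hbb : hB.sqrt * hB.sqrt = B := hB.sqrt_mul_self
  have hadjA : LinearMap.adjoint (Matrix.toEuclideanLin hA.sqrt)
      = Matrix.toEuclideanLin hA.sqrt := by
    rw [← Matrix.toEuclideanLin_conjTranspose_eq_adjoint, haH]
  -- kernel of A is contained in kernel of √A
  have hker : ∀ x : EuclideanSpace ℂ n, Matrix.toEuclideanLin A x = 0 →
      Matrix.toEuclideanLin hA.sqrt x = 0 := by
    intro x hx
    have h0 : (inner ℂ (Matrix.toEuclideanLin hA.sqrt x) (Matrix.toEuclideanLin hA.sqrt x) : ℂ)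
        = 0 := by
      nth_rewrite 1 [← hadjA]
      rw [LinearMap.adjoint_inner_left, ← toEL_mul, haa, hx, inner_zero_right]
    exact inner_self_eq_zero.mp h0
  -- the projection fixes everything in the range of √A
  have hPP : ∀ x : EuclideanSpace ℂ n,
      Matrix.toEuclideanLin PiA (Matrix.toEuclideanLin PiA x)
        = Matrix.toEuclideanLin PiA x := by
    intro x; rw [← toEL_mul, hidem]
  have hPsA : ∀ x : EuclideanSpace ℂ n,
      Matrix.toEuclideanLin PiA (Matrix.toEuclideanLin hA.sqrt x)
        = Matrix.toEuclideanLin hA.sqrt x := by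
    intro x
    have hmem : Matrix.toEuclideanLin hA.sqrt x
        ∈ LinearMap.range (Matrix.toEuclideanLin PiA) := by
      rw [hrange]
      intro y hy
      have hy' : Matrix.toEuclideanLin A y = 0 := LinearMap.mem_ker.mp hy
      rw [← hadjA, LinearMap.adjoint_inner_right, hker y hy', inner_zero_left]
    obtain ⟨z, hz⟩ := hmem
    rw [← hz, hPP]
  -- matrix identities Π√A = √A and √AΠ = √A
  have hPa : PiA * hA.sqrt = hA.sqrt := by
    apply Matrix.toEuclideanLin.injective
    apply LinearMap.ext
    intro x
    rw [toEL_mul]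
    exact hPsA x
  have haP : hA.sqrt * PiA = hA.sqrt := by
    have h := congrArg Matrix.conjTranspose hPa
    rwa [Matrix.conjTranspose_mul, haH, hherm.eq] at h
  -- Π commutes with √B
  have hPb : PiA * hB.sqrt = hB.sqrt * PiA := by
    apply comm_of_conj _ _ hidem
    set S := PiA + PiA - 1 with hSdef
    have hSH : S.conjTranspose = S := by
      simp [hSdef, Matrix.conjTranspose_sub, Matrix.conjTranspose_add, hherm.eq]
    have hpsd : (S * hB.sqrt * S).PosSemidef := by
      have := hB.posSemidef_sqrt.conjTranspose_mul_mul_same S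
      rwa [hSH] at this
    have hSS : S * S = 1 := by
      simp only [hSdef, sub_mul, mul_sub, add_mul, mul_add, one_mul, mul_one, hidem]
      abel
    have hPBP : PiA * B * PiA = PiA * B := by
      rw [mul_assoc, hBcomm, ← mul_assoc, hidem]
    have hSBS : S * B * S = B := by
      simp only [hSdef, sub_mul, add_mul, mul_sub, mul_add, one_mul, mul_one, mul_assoc]
      simp only [hBcomm, ← mul_assoc, hidem]
      abel
    have hsq : (S * hB.sqrt * S) ^ 2 = B := by
      have h1 : (S * hB.sqrt * S) ^ 2 = S * hB.sqrt * (S * S) * hB.sqrt * S := by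
        rw [pow_two]; noncomm_ring
      rw [h1, hSS, mul_one, mul_assoc S hB.sqrt hB.sqrt, hbb, hSBS]
    exact hpsd.eq_sqrt_of_sq_eq hB hsq
  -- main case split
  rcases hv with ⟨lam, hlam⟩ | hv0
  · -- eigenvector case: v ∈ supp A
    right
    rw [hpA, hpB] at hlam
    set w : EuclideanSpace ℂ n := v - Matrix.toEuclideanLin PiA v with hwdef
    have hsAw : Matrix.toEuclideanLin hA.sqrt w = 0 := by
      rw [hwdef, map_sub, ← toEL_mul, haP, sub_self]
    have hPX : Matrix.toEuclideanLin PiA (Matrix.toEuclideanLin (U * hA.sqrt) v)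
        = Matrix.toEuclideanLin (U * hA.sqrt) v := by
      rw [toEL_mul U hA.sqrt, ← toEL_mul PiA U, ← hUcomm, toEL_mul U PiA, hPsA]
    have hsBw : Matrix.toEuclideanLin hB.sqrt w = 0 := by
      rw [hwdef, map_sub, ← toEL_mul, ← hPb, toEL_mul, hlam, map_smul, hPX, sub_self]
    have hAw : Matrix.toEuclideanLin A w = 0 := by
      rw [← haa, toEL_mul, hsAw, map_zero]
    have hBw : Matrix.toEuclideanLin B w = 0 := by
      rw [← hbb, toEL_mul, hsBw, map_zero]
    have hABw : Matrix.toEuclideanLin (A + B) w = 0 := by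
      rw [map_add, LinearMap.add_apply, hAw, hBw, add_zero]
    have hw0 : w = 0 := by
      obtain ⟨M, hM⟩ := hAB
      have h1 : Matrix.toEuclideanLin ((↑M⁻¹ : Matrix n n ℂ) * (A + B)) w = w := by
        rw [← hM, Units.inv_mul, toEL_one]
      rw [toEL_mul, hABw, map_zero] at h1
      exact h1.symm
    have hv_eq : Matrix.toEuclideanLin PiA v = v := by
      have := sub_eq_zero.mp hw0
      exact this.symm
    rw [← hrange]
    exact ⟨v, hv_eq⟩
  · -- √A v = 0 case: v ∈ ker A
    left
    rw [hpA] at hv0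
    show Matrix.toEuclideanLin A v = 0
    rw [← haa, toEL_mul, hv0, map_zero]
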